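/- Let n, m ≥ 1 and let h ∈ ℝ^{n×m} be a fixed matrix with covariance Φ = (1/n)·hᵀh. Let W^v be a random n×n matrix with i.i.d. Gaussian N(0, 1/n) entries and let W be an independent random m×m matrix with i.i.d. standard Gaussian N(0,1) entries; set W̄_{μα} = (1/m)·Σ_{ν=1}^m W_{να}, W̃ = W − W̄, and define the one-step MixiT update h' = W^v · h · ( I_m + (1/√(nm))·W̃ ) with covariance Φ' = (1/n)·h'ᵀh'. Then the entrywise expectation satisfies E[Φ'] = Φ + (1/n)·( (1/m)·Tr(Φ) − M(Φ) )·I_m, where M(Φ) = (1/m²)·Σ_{α,β=1}^m Φ_{αβ}. -/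

import Mathlib

open MeasureTheory ProbabilityTheory Matrix
open scoped NNReal

/-- The column-centered matrix `W̃ = W − W̄`, where `W̄` replaces each entry
by the empirical average of its column. -/
noncomputable def centered (m : ℕ) (W : Fin m × Fin m → ℝ) :
    Matrix (Fin m) (Fin m) ℝ :=
  Matrix.of fun i j => W (i, j) - (1 / (m : ℝ)) * ∑ ν : Fin m, W (ν, j)

/-- One step of the MixiT update: `h' = Wᵛ · h · (I + (1/√(nm))·W̃)`. -/
noncomputable def mixitStep (n m : ℕ) (h : Matrix (Fin n) (Fin m) ℝ)
    (p : ((Fin n × Fin n) → ℝ) × ((Fin m × Fin m) → ℝ)) :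
    Matrix (Fin n) (Fin m) ℝ :=
  (Matrix.of fun i j => p.1 (i, j)) * h *
    ((1 : Matrix (Fin m) (Fin m) ℝ) +
      (Real.sqrt ((n : ℝ) * m))⁻¹ • centered m p.2)

open Real
open scoped ENNReal

lemma integral_mul_exp_neg_mul_sq {b : ℝ} (hb : 0 < b) :
    ∫ x : ℝ, x * Real.exp (-b * x ^ 2) = 0 := by
  have h := integral_neg_eq_self (fun x : ℝ => x * Real.exp (-b * x ^ 2)) (volume : Measure ℝ)
  simp only [neg_sq, neg_mul] at h
  rw [integral_neg] at h
  simp only [neg_mul]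
  linarith [h]

lemma integral_sq_mul_exp_neg_mul_sq {b : ℝ} (hb : 0 < b) :
    ∫ x : ℝ, x ^ 2 * Real.exp (-b * x ^ 2) = (2 * b)⁻¹ * Real.sqrt (π / b) := by
  have hint2 : Integrable (fun x : ℝ => x ^ 2 * Real.exp (-b * x ^ 2)) := by
    have := integrable_rpow_mul_exp_neg_mul_sq hb (s := 2) (by norm_num)
    refine this.congr (Filter.Eventually.of_forall fun x => ?_)
    have : x ^ (2:ℝ) = x ^ (2:ℕ) := by
      rw [← Real.rpow_natCast x 2]; norm_num
    simp [this]
  have hderiv : ∀ x : ℝ, HasDerivAt (fun x : ℝ => x * Real.exp (-b * x ^ 2))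
      (Real.exp (-b * x ^ 2) - 2 * b * (x ^ 2 * Real.exp (-b * x ^ 2))) x := by
    intro x
    have h1 : HasDerivAt (fun x : ℝ => -b * x ^ 2) (-b * (2 * x)) x := by
      simpa using ((hasDerivAt_pow 2 x).const_mul (-b))
    have h2 : HasDerivAt (fun x : ℝ => Real.exp (-b * x ^ 2))
        (Real.exp (-b * x ^ 2) * (-b * (2 * x))) x := (Real.hasDerivAt_exp _).comp x h1
    have : HasDerivAt (fun y : ℝ => y * Real.exp (-b * y ^ 2))
        (1 * Real.exp (-b * x ^ 2) + x * (Real.exp (-b * x ^ 2) * (-b * (2 * x)))) x :=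
      (hasDerivAt_id x).mul h2
    convert this using 1
    ring
  have hf' : Integrable (fun x : ℝ =>
      Real.exp (-b * x ^ 2) - 2 * b * (x ^ 2 * Real.exp (-b * x ^ 2))) :=
    (integrable_exp_neg_mul_sq hb).sub (hint2.const_mul _)
  have hzero := integral_eq_zero_of_hasDerivAt_of_integrable hderiv hf'
    (integrable_mul_exp_neg_mul_sq hb)
  rw [integral_sub (integrable_exp_neg_mul_sq hb) (hint2.const_mul _),
    integral_gaussian, integral_const_mul] at hzero
  have hb2 : (2 * b) ≠ 0 := by positivity
  field_simp at hzero ⊢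
  linarith [hzero]

lemma gaussianReal_integral_eq {v : ℝ≥0} (hv : v ≠ 0) (g : ℝ → ℝ) :
    ∫ x, g x ∂(gaussianReal 0 v) = ∫ x, gaussianPDFReal 0 v x * g x := by
  rw [gaussianReal_of_var_ne_zero 0 hv]
  have : (gaussianPDF 0 v) = fun x => ((gaussianPDFReal 0 v x).toNNReal : ℝ≥0∞) := rfl
  rw [this, integral_withDensity_eq_integral_smul
    ((measurable_gaussianPDFReal 0 v).real_toNNReal)]
  congr 1
  ext x
  simp [NNReal.smul_def, Real.coe_toNNReal _ (gaussianPDFReal_nonneg 0 v x)]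

lemma gaussianReal_integrable_iff {v : ℝ≥0} (hv : v ≠ 0) (g : ℝ → ℝ) :
    Integrable g (gaussianReal 0 v) ↔
      Integrable (fun x => gaussianPDFReal 0 v x * g x) := by
  rw [gaussianReal_of_var_ne_zero 0 hv]
  have : (gaussianPDF 0 v) = fun x => ((gaussianPDFReal 0 v x).toNNReal : ℝ≥0∞) := rfl
  rw [this, integrable_withDensity_iff_integrable_smul
    ((measurable_gaussianPDFReal 0 v).real_toNNReal)]
  constructor <;> intro hh <;> refine hh.congr (Filter.Eventually.of_forall fun x => ?_) <;>
    simp [NNReal.smul_def, Real.coe_toNNReal _ (gaussianPDFReal_nonneg 0 v x)]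

lemma gaussianPDFReal_zero_eq {v : ℝ≥0} (x : ℝ) :
    gaussianPDFReal 0 v x = (Real.sqrt (2 * π * v))⁻¹ * Real.exp (-(2 * (v:ℝ))⁻¹ * x ^ 2) := by
  rw [gaussianPDFReal]
  congr 1
  rw [sub_zero]
  ring_nf

section Moments

variable {v : ℝ≥0}

lemma v_coe_pos (hv : v ≠ 0) : 0 < (v : ℝ) := by
  exact_mod_cast zero_lt_iff.mpr hv

lemma b_pos (hv : v ≠ 0) : 0 < (2 * (v : ℝ))⁻¹ := by
  have := v_coe_pos hv; positivity

variable (hv : v ≠ 0)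
include hv

lemma gaussianReal_integrable_id : Integrable (fun x => x) (gaussianReal 0 v) := by
  rw [gaussianReal_integrable_iff hv]
  have := (integrable_mul_exp_neg_mul_sq (b_pos hv)).const_mul (Real.sqrt (2 * π * v))⁻¹
  refine this.congr (Filter.Eventually.of_forall fun x => ?_)
  simp only [gaussianPDFReal_zero_eq]
  ring

lemma gaussianReal_integrable_sq : Integrable (fun x => x * x) (gaussianReal 0 v) := by
  rw [gaussianReal_integrable_iff hv]
  have h2 : Integrable (fun x : ℝ => x ^ 2 * Real.exp (-(2 * (v:ℝ))⁻¹ * x ^ 2)) := by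
    have := integrable_rpow_mul_exp_neg_mul_sq (b_pos hv) (s := 2) (by norm_num)
    refine this.congr (Filter.Eventually.of_forall fun x => ?_)
    have : x ^ (2:ℝ) = x ^ (2:ℕ) := by
      rw [← Real.rpow_natCast x 2]; norm_num
    simp [this]
  have := h2.const_mul (Real.sqrt (2 * π * v))⁻¹
  refine this.congr (Filter.Eventually.of_forall fun x => ?_)
  simp only [gaussianPDFReal_zero_eq]
  ring

lemma gaussianReal_integral_id : ∫ x, x ∂(gaussianReal 0 v) = 0 := by
  rw [gaussianReal_integral_eq hv]
  have : ∀ x : ℝ, gaussianPDFReal 0 v x * x =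
      (Real.sqrt (2 * π * v))⁻¹ * (x * Real.exp (-(2 * (v:ℝ))⁻¹ * x ^ 2)) := by
    intro x; rw [gaussianPDFReal_zero_eq]; ring
  simp_rw [this]
  rw [integral_const_mul, integral_mul_exp_neg_mul_sq (b_pos hv), mul_zero]

lemma gaussianReal_integral_sq : ∫ x, x * x ∂(gaussianReal 0 v) = v := by
  rw [gaussianReal_integral_eq hv]
  have : ∀ x : ℝ, gaussianPDFReal 0 v x * (x * x) =
      (Real.sqrt (2 * π * v))⁻¹ * (x ^ 2 * Real.exp (-(2 * (v:ℝ))⁻¹ * x ^ 2)) := by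
    intro x; rw [gaussianPDFReal_zero_eq]; ring
  simp_rw [this]
  rw [integral_const_mul, integral_sq_mul_exp_neg_mul_sq (b_pos hv)]
  have hvp := v_coe_pos hv
  have h1 : (2 * ((2 : ℝ) * v)⁻¹)⁻¹ = (v : ℝ) := by
    field_simp
  have h2 : π / ((2 : ℝ) * (v:ℝ))⁻¹ = 2 * π * v := by
    field_simp
  rw [h1, h2]
  have h3 : Real.sqrt (2 * π * v) ≠ 0 := by
    refine Real.sqrt_ne_zero'.mpr ?_
    positivity
  field_simp

end Moments

section Pi

variable {ι : Type*} [Fintype ι] [DecidableEq ι] {v : ℝ≥0}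

local notation "μpi" => MeasureTheory.Measure.pi (fun _ : ι => gaussianReal 0 v)

lemma eval_mul_eval_prod (a b : ι) (x : ι → ℝ) :
    x a * x b = ∏ i, ((if i = a then x i else 1) * (if i = b then x i else 1)) := by
  rw [Finset.prod_mul_distrib]
  simp [Finset.prod_ite_eq']

lemma integrable_eval_mul_eval (hv : v ≠ 0) (a b : ι) :
    Integrable (fun x : ι → ℝ => x a * x b) μpi := by
  letI : MeasureSpace ℝ := ⟨gaussianReal 0 v⟩
  haveI : IsProbabilityMeasure (volume : Measure ℝ) := instIsProbabilityMeasureGaussianReal 0 v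
  have hμ : μpi = (volume : Measure (ι → ℝ)) := rfl
  rw [hμ]
  have hint : ∀ i : ι, Integrable (fun t : ℝ =>
      (if i = a then t else 1) * (if i = b then t else 1)) := by
    intro i
    rcases eq_or_ne i a with rfl | hia <;> rcases eq_or_ne i b with rfl | hib
    · simpa using (show Integrable (fun t : ℝ => t * t) (volume : Measure ℝ) from gaussianReal_integrable_sq hv)
    · simpa [hib] using (show Integrable (fun t : ℝ => t) (volume : Measure ℝ) from gaussianReal_integrable_id hv)
    · simpa [hia] using (show Integrable (fun t : ℝ => t) (volume : Measure ℝ) from gaussianReal_integrable_id hv)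
    · simpa [hia, hib] using (integrable_const (1:ℝ))
  have := Integrable.fintype_prod (E := ℝ)
    (f := fun i t => (if i = a then t else 1) * (if i = b then t else 1)) hint
  refine this.congr (Filter.Eventually.of_forall fun x => ?_)
  exact (eval_mul_eval_prod a b x).symm

lemma integral_eval_mul_eval (hv : v ≠ 0) (a b : ι) :
    ∫ x : ι → ℝ, x a * x b ∂μpi = if a = b then (v : ℝ) else 0 := by
  letI : MeasureSpace ℝ := ⟨gaussianReal 0 v⟩
  haveI : IsProbabilityMeasure (volume : Measure ℝ) := instIsProbabilityMeasureGaussianReal 0 v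
  have hμ : μpi = (volume : Measure (ι → ℝ)) := rfl
  rw [hμ]
  calc ∫ x : ι → ℝ, x a * x b
      = ∫ x : ι → ℝ, ∏ i, ((if i = a then x i else 1) * (if i = b then x i else 1)) := by
        congr 1; funext x; exact eval_mul_eval_prod a b x
    _ = ∏ i, ∫ t : ℝ, (if i = a then t else 1) * (if i = b then t else 1) := by
        exact integral_fintype_prod_eq_prod
          (f := fun i t => (if i = a then t else 1) * (if i = b then t else 1))
    _ = if a = b then (v : ℝ) else 0 := by
        by_cases hab : a = b
        · subst hab
          rw [Finset.prod_eq_single a]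
          · simpa using (show ∫ t : ℝ, t * t = (v : ℝ) from gaussianReal_integral_sq hv)
          · intro i _ hia
            simp only [if_neg hia, one_mul, mul_one, integral_const, measureReal_def, measure_univ,
              ENNReal.toReal_one, one_smul]
          · simp
        · rw [Finset.prod_eq_zero (Finset.mem_univ a), if_neg hab]
          have h1 : (∫ t : ℝ, (if a = a then t else 1) * (if a = b then t else 1))
              = ∫ t : ℝ, t := by
            congr 1; funext t; simp [hab]
          rw [h1]
          exact gaussianReal_integral_id hv

lemma integrable_eval (hv : v ≠ 0) (a : ι) :
    Integrable (fun x : ι → ℝ => x a) μpi := by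
  letI : MeasureSpace ℝ := ⟨gaussianReal 0 v⟩
  haveI : IsProbabilityMeasure (volume : Measure ℝ) := instIsProbabilityMeasureGaussianReal 0 v
  have hμ : μpi = (volume : Measure (ι → ℝ)) := rfl
  rw [hμ]
  have hint : ∀ i : ι, Integrable (fun t : ℝ => (if i = a then t else 1)) := by
    intro i
    rcases eq_or_ne i a with rfl | hia
    · simpa using (show Integrable (fun t : ℝ => t) (volume : Measure ℝ) from gaussianReal_integrable_id hv)
    · simpa [hia] using (integrable_const (1:ℝ))
  have := Integrable.fintype_prod (E := ℝ) (f := fun i t => (if i = a then t else 1)) hint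
  refine this.congr (Filter.Eventually.of_forall fun x => ?_)
  simp [Finset.prod_ite_eq']

lemma integral_eval (hv : v ≠ 0) (a : ι) :
    ∫ x : ι → ℝ, x a ∂μpi = 0 := by
  letI : MeasureSpace ℝ := ⟨gaussianReal 0 v⟩
  haveI : IsProbabilityMeasure (volume : Measure ℝ) := instIsProbabilityMeasureGaussianReal 0 v
  have hμ : μpi = (volume : Measure (ι → ℝ)) := rfl
  rw [hμ]
  calc ∫ x : ι → ℝ, x a
      = ∫ x : ι → ℝ, ∏ i, (if i = a then x i else 1) := by
        congr 1; funext x; simp [Finset.prod_ite_eq']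
    _ = ∏ i, ∫ t : ℝ, (if i = a then t else 1) := by
        exact integral_fintype_prod_eq_prod (f := fun i t => (if i = a then t else 1))
    _ = 0 := by
        rw [Finset.prod_eq_zero (Finset.mem_univ a)]
        simp only [if_pos rfl]
        exact gaussianReal_integral_id hv

end Pi

section Centered

variable {m : ℕ}

local notation "μW" => MeasureTheory.Measure.pi (fun _ : Fin m × Fin m => gaussianReal 0 1)

lemma centered_apply (w : Fin m × Fin m → ℝ) (γ α : Fin m) :
    centered m w γ α = w (γ, α) - (1 / (m:ℝ)) * ∑ ν : Fin m, w (ν, α) := rfl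

lemma centered_mul_expand (w : Fin m × Fin m → ℝ) (γ α δ β : Fin m) :
    centered m w γ α * centered m w δ β =
      w (γ, α) * w (δ, β)
      - (1 / (m:ℝ)) * ∑ ν : Fin m, w (ν, α) * w (δ, β)
      - (1 / (m:ℝ)) * ∑ ν : Fin m, w (γ, α) * w (ν, β)
      + (1 / (m:ℝ)) * (1 / (m:ℝ)) * ∑ ν : Fin m, ∑ ν' : Fin m, w (ν, α) * w (ν', β) := by
  rw [centered_apply, centered_apply, ← Finset.sum_mul, ← Finset.mul_sum,
    ← Finset.sum_mul_sum]
  ring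

lemma integrable_centered (γ α : Fin m) :
    Integrable (fun w : Fin m × Fin m → ℝ => centered m w γ α) μW := by
  have h1 : Integrable (fun w : Fin m × Fin m → ℝ => w (γ, α)) μW :=
    integrable_eval one_ne_zero _
  have h2 : Integrable (fun w : Fin m × Fin m → ℝ =>
      (1 / (m:ℝ)) * ∑ ν : Fin m, w (ν, α)) μW :=
    (integrable_finset_sum _ fun ν _ => integrable_eval one_ne_zero _).const_mul _
  exact h1.sub h2

lemma integral_centered (γ α : Fin m) :
    ∫ w : Fin m × Fin m → ℝ, centered m w γ α ∂μW = 0 := by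
  simp_rw [centered_apply]
  rw [integral_sub (integrable_eval one_ne_zero _)
    ((integrable_finset_sum _ fun ν _ => integrable_eval one_ne_zero _).const_mul _),
    integral_eval one_ne_zero, integral_const_mul,
    integral_finset_sum _ (fun ν _ => integrable_eval one_ne_zero _)]
  simp [integral_eval one_ne_zero]

lemma integrable_centered_mul (γ α δ β : Fin m) :
    Integrable (fun w : Fin m × Fin m → ℝ => centered m w γ α * centered m w δ β) μW := by
  have I1 : Integrable (fun w : Fin m × Fin m → ℝ => w (γ, α) * w (δ, β)) μW :=
    integrable_eval_mul_eval one_ne_zero _ _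
  have I2 : Integrable (fun w : Fin m × Fin m → ℝ =>
      (1 / (m:ℝ)) * ∑ ν : Fin m, w (ν, α) * w (δ, β)) μW :=
    (integrable_finset_sum _ fun ν _ => integrable_eval_mul_eval one_ne_zero _ _).const_mul _
  have I3 : Integrable (fun w : Fin m × Fin m → ℝ =>
      (1 / (m:ℝ)) * ∑ ν : Fin m, w (γ, α) * w (ν, β)) μW :=
    (integrable_finset_sum _ fun ν _ => integrable_eval_mul_eval one_ne_zero _ _).const_mul _
  have I4 : Integrable (fun w : Fin m × Fin m → ℝ =>
      (1 / (m:ℝ)) * (1 / (m:ℝ)) * ∑ ν : Fin m, ∑ ν' : Fin m, w (ν, α) * w (ν', β)) μW :=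
    ((integrable_finset_sum _ fun ν _ => integrable_finset_sum _ fun ν' _ =>
      integrable_eval_mul_eval one_ne_zero _ _).const_mul _)
  refine (((I1.sub I2).sub I3).add I4).congr (Filter.Eventually.of_forall fun w => ?_)
  exact (centered_mul_expand w γ α δ β).symm

lemma integral_centered_mul (hm : 1 ≤ m) (γ α δ β : Fin m) :
    ∫ w : Fin m × Fin m → ℝ, centered m w γ α * centered m w δ β ∂μW =
      if α = β then (if γ = δ then (1:ℝ) else 0) - 1 / (m:ℝ) else 0 := by
  have I1 : Integrable (fun w : Fin m × Fin m → ℝ => w (γ, α) * w (δ, β)) μW :=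
    integrable_eval_mul_eval one_ne_zero _ _
  have I2 : Integrable (fun w : Fin m × Fin m → ℝ =>
      (1 / (m:ℝ)) * ∑ ν : Fin m, w (ν, α) * w (δ, β)) μW :=
    (integrable_finset_sum _ fun ν _ => integrable_eval_mul_eval one_ne_zero _ _).const_mul _
  have I3 : Integrable (fun w : Fin m × Fin m → ℝ =>
      (1 / (m:ℝ)) * ∑ ν : Fin m, w (γ, α) * w (ν, β)) μW :=
    (integrable_finset_sum _ fun ν _ => integrable_eval_mul_eval one_ne_zero _ _).const_mul _
  have I4 : Integrable (fun w : Fin m × Fin m → ℝ =>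
      (1 / (m:ℝ)) * (1 / (m:ℝ)) * ∑ ν : Fin m, ∑ ν' : Fin m, w (ν, α) * w (ν', β)) μW :=
    ((integrable_finset_sum _ fun ν _ => integrable_finset_sum _ fun ν' _ =>
      integrable_eval_mul_eval one_ne_zero _ _).const_mul _)
  have S3 : Integrable (fun w : Fin m × Fin m → ℝ =>
      w (γ, α) * w (δ, β) - (1 / (m:ℝ)) * ∑ ν : Fin m, w (ν, α) * w (δ, β)) μW := I1.sub I2
  have S4 : Integrable (fun w : Fin m × Fin m → ℝ =>
      w (γ, α) * w (δ, β) - (1 / (m:ℝ)) * ∑ ν : Fin m, w (ν, α) * w (δ, β)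
        - (1 / (m:ℝ)) * ∑ ν : Fin m, w (γ, α) * w (ν, β)) μW := S3.sub I3
  simp_rw [centered_mul_expand]
  rw [integral_add S4 I4, integral_sub S3 I3, integral_sub I1 I2,
    integral_eval_mul_eval one_ne_zero, integral_const_mul, integral_const_mul,
    integral_const_mul,
    integral_finset_sum _ (fun ν _ => integrable_eval_mul_eval one_ne_zero _ _),
    integral_finset_sum _ (fun ν _ => integrable_eval_mul_eval one_ne_zero _ _),
    integral_finset_sum _ (fun ν _ => integrable_finset_sum _ fun ν' _ =>
      integrable_eval_mul_eval one_ne_zero _ _)]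
  simp_rw [integral_finset_sum _ (fun ν' _ => integrable_eval_mul_eval one_ne_zero _ _),
    integral_eval_mul_eval one_ne_zero]
  have hmne : (m:ℝ) ≠ 0 := by
    have : 0 < m := hm
    positivity
  by_cases hab : α = β
  · subst hab
    simp only [Prod.mk.injEq, and_true, if_pos rfl]
    have e1 : (∑ ν : Fin m, if (ν : Fin m) = δ then ((1:ℝ≥0):ℝ) else 0) = 1 := by
      simp
    have e2 : (∑ ν : Fin m, if γ = ν then ((1:ℝ≥0):ℝ) else 0) = 1 := by
      simp
    have e3 : (∑ ν : Fin m, ∑ ν' : Fin m, if ν = ν' then ((1:ℝ≥0):ℝ) else 0) = (m:ℝ) := by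
      simp
    rw [e1, e2, e3]
    have hmne : (m:ℝ) ≠ 0 := by
      have : 0 < m := hm
      positivity
    by_cases hgd : γ = δ <;> simp [hgd] <;> field_simp <;> ring
  · simp only [Prod.mk.injEq, hab, and_false, if_false]
    simp

end Centered

section GFun

variable {n m : ℕ}

local notation "μW" => MeasureTheory.Measure.pi (fun _ : Fin m × Fin m => gaussianReal 0 1)

/-- `(h·(I + c·W̃))_{jα}`. -/
noncomputable def Gf (n m : ℕ) (h : Matrix (Fin n) (Fin m) ℝ)
    (w : Fin m × Fin m → ℝ) (j : Fin n) (α : Fin m) : ℝ :=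
  h j α + (Real.sqrt ((n : ℝ) * m))⁻¹ * ∑ γ : Fin m, h j γ * centered m w γ α

lemma hA_apply (h : Matrix (Fin n) (Fin m) ℝ) (w : Fin m × Fin m → ℝ) (j : Fin n) (α : Fin m) :
    (h * ((1 : Matrix (Fin m) (Fin m) ℝ) +
      (Real.sqrt ((n : ℝ) * m))⁻¹ • centered m w)) j α = Gf n m h w j α := by
  rw [Matrix.mul_add, Matrix.mul_one, Matrix.mul_smul, Matrix.add_apply, Matrix.smul_apply,
    Matrix.mul_apply, Gf, smul_eq_mul]

lemma mixitStep_apply (h : Matrix (Fin n) (Fin m) ℝ)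
    (p : ((Fin n × Fin n) → ℝ) × ((Fin m × Fin m) → ℝ)) (i : Fin n) (α : Fin m) :
    mixitStep n m h p i α = ∑ j : Fin n, p.1 (i, j) * Gf n m h p.2 j α := by
  rw [mixitStep, Matrix.mul_assoc, Matrix.mul_apply]
  refine Finset.sum_congr rfl fun j _ => ?_
  rw [hA_apply]
  rfl

lemma Gf_mul_expand (h : Matrix (Fin n) (Fin m) ℝ) (w : Fin m × Fin m → ℝ)
    (j k : Fin n) (α β : Fin m) :
    Gf n m h w j α * Gf n m h w k β =
      h j α * h k β
      + ∑ δ : Fin m, ((Real.sqrt ((n : ℝ) * m))⁻¹ * h j α * h k δ) * centered m w δ β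
      + ∑ γ : Fin m, ((Real.sqrt ((n : ℝ) * m))⁻¹ * h k β * h j γ) * centered m w γ α
      + ∑ γ : Fin m, ∑ δ : Fin m,
          ((Real.sqrt ((n : ℝ) * m))⁻¹ * (Real.sqrt ((n : ℝ) * m))⁻¹ * h j γ * h k δ) *
            (centered m w γ α * centered m w δ β) := by
  set c := (Real.sqrt ((n : ℝ) * m))⁻¹ with hc
  have e2 : ∑ δ : Fin m, (c * h j α * h k δ) * centered m w δ β
      = c * h j α * ∑ δ : Fin m, h k δ * centered m w δ β := by
    rw [Finset.mul_sum]
    exact Finset.sum_congr rfl fun δ _ => by ring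
  have e3 : ∑ γ : Fin m, (c * h k β * h j γ) * centered m w γ α
      = c * h k β * ∑ γ : Fin m, h j γ * centered m w γ α := by
    rw [Finset.mul_sum]
    exact Finset.sum_congr rfl fun γ _ => by ring
  have e4 : ∑ γ : Fin m, ∑ δ : Fin m, (c * c * h j γ * h k δ) *
        (centered m w γ α * centered m w δ β)
      = (c * ∑ γ : Fin m, h j γ * centered m w γ α) *
        (c * ∑ δ : Fin m, h k δ * centered m w δ β) := by
    rw [Finset.mul_sum, Finset.sum_mul]
    refine Finset.sum_congr rfl fun γ _ => ?_
    rw [Finset.mul_sum, Finset.mul_sum]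
    exact Finset.sum_congr rfl fun δ _ => by ring
  rw [e2, e3, e4, Gf, Gf]
  ring

lemma integrable_Gf_mul (h : Matrix (Fin n) (Fin m) ℝ) (j k : Fin n) (α β : Fin m) :
    Integrable (fun w : Fin m × Fin m → ℝ => Gf n m h w j α * Gf n m h w k β) μW := by
  set c := (Real.sqrt ((n : ℝ) * m))⁻¹ with hc
  have I1 : Integrable (fun _ : Fin m × Fin m → ℝ => h j α * h k β) μW := integrable_const _
  have I2 : Integrable (fun w : Fin m × Fin m → ℝ =>
      ∑ δ : Fin m, (c * h j α * h k δ) * centered m w δ β) μW :=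
    integrable_finset_sum _ fun δ _ => (integrable_centered δ β).const_mul _
  have I3 : Integrable (fun w : Fin m × Fin m → ℝ =>
      ∑ γ : Fin m, (c * h k β * h j γ) * centered m w γ α) μW :=
    integrable_finset_sum _ fun γ _ => (integrable_centered γ α).const_mul _
  have I4 : Integrable (fun w : Fin m × Fin m → ℝ =>
      ∑ γ : Fin m, ∑ δ : Fin m, (c * c * h j γ * h k δ) *
        (centered m w γ α * centered m w δ β)) μW :=
    integrable_finset_sum _ fun γ _ => integrable_finset_sum _ fun δ _ =>
      (integrable_centered_mul γ α δ β).const_mul _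
  refine (((I1.add I2).add I3).add I4).congr (Filter.Eventually.of_forall fun w => ?_)
  exact (Gf_mul_expand h w j k α β).symm

lemma integral_Gf_mul (hm : 1 ≤ m) (h : Matrix (Fin n) (Fin m) ℝ) (j k : Fin n) (α β : Fin m) :
    ∫ w : Fin m × Fin m → ℝ, Gf n m h w j α * Gf n m h w k β ∂μW =
      h j α * h k β +
        ((Real.sqrt ((n : ℝ) * m))⁻¹ * (Real.sqrt ((n : ℝ) * m))⁻¹) *
          (if α = β then
            (∑ γ : Fin m, h j γ * h k γ) -
              (1 / (m:ℝ)) * ((∑ γ : Fin m, h j γ) * (∑ δ : Fin m, h k δ))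
          else 0) := by
  set c := (Real.sqrt ((n : ℝ) * m))⁻¹ with hc
  have I1 : Integrable (fun _ : Fin m × Fin m → ℝ => h j α * h k β) μW := integrable_const _
  have I2 : Integrable (fun w : Fin m × Fin m → ℝ =>
      ∑ δ : Fin m, (c * h j α * h k δ) * centered m w δ β) μW :=
    integrable_finset_sum _ fun δ _ => (integrable_centered δ β).const_mul _
  have I3 : Integrable (fun w : Fin m × Fin m → ℝ =>
      ∑ γ : Fin m, (c * h k β * h j γ) * centered m w γ α) μW :=
    integrable_finset_sum _ fun γ _ => (integrable_centered γ α).const_mul _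
  have I4 : Integrable (fun w : Fin m × Fin m → ℝ =>
      ∑ γ : Fin m, ∑ δ : Fin m, (c * c * h j γ * h k δ) *
        (centered m w γ α * centered m w δ β)) μW :=
    integrable_finset_sum _ fun γ _ => integrable_finset_sum _ fun δ _ =>
      (integrable_centered_mul γ α δ β).const_mul _
  have S2 : Integrable (fun w : Fin m × Fin m → ℝ =>
      h j α * h k β + ∑ δ : Fin m, (c * h j α * h k δ) * centered m w δ β) μW := I1.add I2
  have S3 : Integrable (fun w : Fin m × Fin m → ℝ =>
      h j α * h k β + ∑ δ : Fin m, (c * h j α * h k δ) * centered m w δ β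
        + ∑ γ : Fin m, (c * h k β * h j γ) * centered m w γ α) μW := S2.add I3
  simp_rw [Gf_mul_expand h _ j k α β]
  rw [integral_add S3 I4, integral_add S2 I3, integral_add I1 I2, integral_const,
    integral_finset_sum _ (fun δ _ => (integrable_centered δ β).const_mul _),
    integral_finset_sum _ (fun γ _ => (integrable_centered γ α).const_mul _),
    integral_finset_sum _ (fun γ _ => integrable_finset_sum _ fun δ _ =>
      (integrable_centered_mul γ α δ β).const_mul _)]
  simp_rw [integral_finset_sum _ (fun δ _ => (integrable_centered_mul _ α _ β).const_mul _),
    integral_const_mul, integral_centered, mul_zero, Finset.sum_const_zero, add_zero,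
    integral_centered_mul hm]
  have hmeas : (μW).real Set.univ = 1 := by simp
  rw [hmeas, one_smul]
  by_cases hab : α = β
  · rw [if_pos hab]
    simp only [if_pos hab]
    have L : (∑ γ : Fin m, ∑ δ : Fin m, c * c * h j γ * h k δ *
          ((if γ = δ then (1:ℝ) else 0) - 1 / (m:ℝ)))
        = c * c * (∑ γ : Fin m, h j γ * h k γ)
          - c * c * (1 / (m:ℝ)) * ∑ γ : Fin m, ∑ δ : Fin m, h j γ * h k δ := by
      simp only [mul_sub, Finset.sum_sub_distrib]
      congr 1
      · rw [Finset.mul_sum]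
        refine Finset.sum_congr rfl fun γ _ => ?_
        simp [mul_ite, mul_one, mul_zero, Finset.sum_ite_eq]
        ring
      · rw [Finset.mul_sum]
        refine Finset.sum_congr rfl fun γ _ => ?_
        rw [Finset.mul_sum]
        refine Finset.sum_congr rfl fun δ _ => ?_
        ring
    rw [L, Finset.sum_mul_sum]
    ring
  · rw [if_neg hab]
    simp only [if_neg hab, mul_zero, Finset.sum_const_zero, add_zero]

end GFun

theorem mixit_covariance_drift (n m : ℕ) (hn : 1 ≤ n) (hm : 1 ≤ m)
    (h : Matrix (Fin n) (Fin m) ℝ) (α β : Fin m) :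
    (∫ p : ((Fin n × Fin n) → ℝ) × ((Fin m × Fin m) → ℝ),
        (((n : ℝ)⁻¹ • ((mixitStep n m h p)ᵀ * mixitStep n m h p)) α β)
        ∂(Measure.prod
            (Measure.pi fun _ : Fin n × Fin n => gaussianReal 0 (1 / (n : ℝ≥0)))
            (Measure.pi fun _ : Fin m × Fin m => gaussianReal 0 1))) =
      ((n : ℝ)⁻¹ • (hᵀ * h)) α β +
        (1 / (n : ℝ)) *
          ((1 / (m : ℝ)) * ((n : ℝ)⁻¹ • (hᵀ * h)).trace -
            (1 / (m : ℝ) ^ 2) *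
              ∑ γ : Fin m, ∑ δ : Fin m, ((n : ℝ)⁻¹ • (hᵀ * h)) γ δ) *
          (if α = β then (1 : ℝ) else 0) := by
  set μV := Measure.pi fun _ : Fin n × Fin n => gaussianReal 0 (1 / (n : ℝ≥0)) with hμV
  set μW := Measure.pi fun _ : Fin m × Fin m => gaussianReal 0 1 with hμW
  set c := (Real.sqrt ((n : ℝ) * m))⁻¹ with hc
  have hnne : (n : ℝ) ≠ 0 := by
    have : 0 < n := hn
    positivity
  have hmne : (m : ℝ) ≠ 0 := by
    have : 0 < m := hm
    positivity
  have hvn : (1 / (n : ℝ≥0)) ≠ 0 := by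
    refine one_div_ne_zero ?_
    exact_mod_cast hnne
  have hcn : ((1 / (n : ℝ≥0) : ℝ≥0) : ℝ) = (n : ℝ)⁻¹ := by
    rw [NNReal.coe_div, NNReal.coe_one, NNReal.coe_natCast, one_div]
  have hc2 : c * c = ((n : ℝ) * m)⁻¹ := by
    rw [hc, ← mul_inv, Real.mul_self_sqrt (by positivity)]
  -- pointwise expansion of the integrand
  have hpt : ∀ p : ((Fin n × Fin n) → ℝ) × ((Fin m × Fin m) → ℝ),
      (((n : ℝ)⁻¹ • ((mixitStep n m h p)ᵀ * mixitStep n m h p)) α β) =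
      (n : ℝ)⁻¹ * ∑ i : Fin n, ∑ j : Fin n, ∑ k : Fin n,
        (p.1 (i, j) * p.1 (i, k)) * (Gf n m h p.2 j α * Gf n m h p.2 k β) := by
    intro p
    rw [Matrix.smul_apply, Matrix.mul_apply, smul_eq_mul]
    congr 1
    refine Finset.sum_congr rfl fun i _ => ?_
    rw [Matrix.transpose_apply, mixitStep_apply, mixitStep_apply, Finset.sum_mul_sum]
    exact Finset.sum_congr rfl fun j _ => Finset.sum_congr rfl fun k _ => by ring
  have Tint : ∀ i j k : Fin n, Integrable
      (fun p : ((Fin n × Fin n) → ℝ) × ((Fin m × Fin m) → ℝ) =>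
        (p.1 (i, j) * p.1 (i, k)) * (Gf n m h p.2 j α * Gf n m h p.2 k β)) (μV.prod μW) :=
    fun i j k => (integrable_eval_mul_eval hvn _ _).mul_prod (integrable_Gf_mul h j k α β)
  have Eterm : ∀ i j k : Fin n,
      (∫ p : ((Fin n × Fin n) → ℝ) × ((Fin m × Fin m) → ℝ),
        (p.1 (i, j) * p.1 (i, k)) * (Gf n m h p.2 j α * Gf n m h p.2 k β) ∂(μV.prod μW)) =
      (if j = k then ((1 / (n : ℝ≥0) : ℝ≥0) : ℝ) else 0) *
        (h j α * h k β + (c * c) *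
          (if α = β then
            (∑ γ : Fin m, h j γ * h k γ) -
              (1 / (m:ℝ)) * ((∑ γ : Fin m, h j γ) * (∑ δ : Fin m, h k δ))
          else 0)) := by
    intro i j k
    rw [integral_prod_mul (f := fun v : (Fin n × Fin n) → ℝ => v (i, j) * v (i, k))
        (g := fun w : (Fin m × Fin m) → ℝ => Gf n m h w j α * Gf n m h w k β),
      integral_eval_mul_eval hvn, integral_Gf_mul hm]
    congr 1
    simp [Prod.ext_iff]
  calc (∫ p : ((Fin n × Fin n) → ℝ) × ((Fin m × Fin m) → ℝ),
        (((n : ℝ)⁻¹ • ((mixitStep n m h p)ᵀ * mixitStep n m h p)) α β) ∂(μV.prod μW))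
      = ∫ p : ((Fin n × Fin n) → ℝ) × ((Fin m × Fin m) → ℝ),
        (n : ℝ)⁻¹ * ∑ i : Fin n, ∑ j : Fin n, ∑ k : Fin n,
          (p.1 (i, j) * p.1 (i, k)) * (Gf n m h p.2 j α * Gf n m h p.2 k β)
          ∂(μV.prod μW) := integral_congr_ae (Filter.Eventually.of_forall hpt)
    _ = (n : ℝ)⁻¹ * ∑ i : Fin n, ∑ j : Fin n, ∑ k : Fin n,
          ∫ p : ((Fin n × Fin n) → ℝ) × ((Fin m × Fin m) → ℝ),
            (p.1 (i, j) * p.1 (i, k)) * (Gf n m h p.2 j α * Gf n m h p.2 k β)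
            ∂(μV.prod μW) := by
        rw [integral_const_mul,
          integral_finset_sum _ (fun i _ => integrable_finset_sum _ fun j _ =>
            integrable_finset_sum _ fun k _ => Tint i j k)]
        congr 1
        refine Finset.sum_congr rfl fun i _ => ?_
        rw [integral_finset_sum _ (fun j _ => integrable_finset_sum _ fun k _ => Tint i j k)]
        refine Finset.sum_congr rfl fun j _ => ?_
        exact integral_finset_sum _ fun k _ => Tint i j k
    _ = (n : ℝ)⁻¹ * ∑ i : Fin n, ∑ j : Fin n,
          ((1 / (n : ℝ≥0) : ℝ≥0) : ℝ) *
            (h j α * h j β + (c * c) *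
              (if α = β then
                (∑ γ : Fin m, h j γ * h j γ) -
                  (1 / (m:ℝ)) * ((∑ γ : Fin m, h j γ) * (∑ δ : Fin m, h j δ))
              else 0)) := by
        congr 1
        refine Finset.sum_congr rfl fun i _ => Finset.sum_congr rfl fun j _ => ?_
        simp_rw [Eterm i]
        simp_rw [ite_mul, zero_mul]
        rw [Finset.sum_ite_eq]
        simp
    _ = ((n : ℝ)⁻¹ • (hᵀ * h)) α β +
        (1 / (n : ℝ)) *
          ((1 / (m : ℝ)) * ((n : ℝ)⁻¹ • (hᵀ * h)).trace -
            (1 / (m : ℝ) ^ 2) *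
              ∑ γ : Fin m, ∑ δ : Fin m, ((n : ℝ)⁻¹ • (hᵀ * h)) γ δ) *
          (if α = β then (1 : ℝ) else 0) := by
        rw [Finset.sum_const, Finset.card_univ, Fintype.card_fin, hcn, hc2]
        have hR1 : ((n : ℝ)⁻¹ • (hᵀ * h)) α β = (n : ℝ)⁻¹ * ∑ j, h j α * h j β := by
          simp [Matrix.smul_apply, Matrix.mul_apply, smul_eq_mul]
        have hRtr : ((n : ℝ)⁻¹ • (hᵀ * h)).trace
            = (n : ℝ)⁻¹ * ∑ γ : Fin m, ∑ j, h j γ * h j γ := by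
          rw [Matrix.trace, Finset.mul_sum]
          refine Finset.sum_congr rfl fun γ _ => ?_
          simp [Matrix.diag, Matrix.smul_apply, Matrix.mul_apply, smul_eq_mul]
        have hRs : (∑ γ : Fin m, ∑ δ : Fin m, ((n : ℝ)⁻¹ • (hᵀ * h)) γ δ)
            = (n : ℝ)⁻¹ * ∑ γ : Fin m, ∑ δ : Fin m, ∑ j, h j γ * h j δ := by
          rw [Finset.mul_sum]
          refine Finset.sum_congr rfl fun γ _ => ?_
          rw [Finset.mul_sum]
          refine Finset.sum_congr rfl fun δ _ => ?_
          simp [Matrix.smul_apply, Matrix.mul_apply, smul_eq_mul]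
        rw [hR1, hRtr, hRs]
        by_cases hab : α = β
        · simp only [if_pos hab]
          have hL : (∑ j, (h j α * h j β + ((n : ℝ) * m)⁻¹ *
                ((∑ γ : Fin m, h j γ * h j γ) -
                  (1 / (m:ℝ)) * ((∑ γ : Fin m, h j γ) * (∑ δ : Fin m, h j δ)))))
              = (∑ j, h j α * h j β) + ((n : ℝ) * m)⁻¹ *
                ((∑ γ : Fin m, ∑ j, h j γ * h j γ) -
                  (1 / (m:ℝ)) * ∑ γ : Fin m, ∑ δ : Fin m, ∑ j, h j γ * h j δ) := by
            rw [Finset.sum_add_distrib, ← Finset.mul_sum, Finset.sum_sub_distrib,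
              ← Finset.mul_sum]
            have h2 : (∑ j, ∑ γ : Fin m, h j γ * h j γ)
                = ∑ γ : Fin m, ∑ j, h j γ * h j γ := Finset.sum_comm
            have h3 : (∑ j, (∑ γ : Fin m, h j γ) * (∑ δ : Fin m, h j δ))
                = ∑ γ : Fin m, ∑ δ : Fin m, ∑ j, h j γ * h j δ := by
              simp_rw [Finset.sum_mul_sum]
              rw [Finset.sum_comm]
              exact Finset.sum_congr rfl fun γ _ => Finset.sum_comm
            rw [h2, h3]
          rw [← Finset.mul_sum, hL, nsmul_eq_mul, mul_one]
          field_simp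
        · simp only [if_neg hab, mul_zero, add_zero]
          rw [← Finset.mul_sum, nsmul_eq_mul]
          field_simp
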